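/- arXiv:1512.00066 — 2 statements merged into one kernel-verified Lean document; each statement's English description precedes it below -/
import Mathlib

section
/- If a weighted directed graph on n vertices has no negative-weight cycle, then the Bellman–Ford iteration converges in at most n−1 steps: P^{(n-1)} = P^{(n)} = P^{(r)} for all r ≥ n−1, and P^{(n-1)}_i is the true shortest-walk distance from the source s to vertex i. -/
namespace BF

lemma add_inf {ι : Type*} (a : WithTop ℤ) (t : Finset ι) (ht : t.Nonempty)
    (f : ι → WithTop ℤ) : a + t.inf f = t.inf (fun x => a + f x) := by
  induction ht using Finset.Nonempty.cons_induction with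
  | singleton x => simp
  | cons x u hx hu ih =>
    rw [Finset.inf_cons, Finset.inf_cons, ← ih]
    exact (min_add_add_left a (f x) (u.inf f)).symm

variable {n : ℕ} (A : Fin n → Fin n → WithTop ℤ) (s : Fin n)

def wsum (m : ℕ) (v : Fin (m + 1) → Fin n) : WithTop ℤ :=
  ∑ k : Fin m, A (v k.succ) (v k.castSucc)

def W (m : ℕ) (i : Fin n) : WithTop ℤ :=
  Finset.univ.inf (fun v : Fin (m + 1) → Fin n =>
    if v 0 = s ∧ v (Fin.last m) = i then wsum A m v else ⊤)

def weightL : List (Fin n) → WithTop ℤ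
  | [] => 0
  | [_] => 0
  | x :: y :: t => A y x + weightL (y :: t)

@[simp] lemma weightL_nil : weightL A ([] : List (Fin n)) = 0 := rfl
@[simp] lemma weightL_single (x : Fin n) : weightL A [x] = 0 := rfl
@[simp] lemma weightL_cons_cons (x y : Fin n) (t : List (Fin n)) :
    weightL A (x :: y :: t) = A y x + weightL A (y :: t) := rfl

lemma wsum_eq_weightL (m : ℕ) (v : Fin (m + 1) → Fin n) :
    wsum A m v = weightL A (List.ofFn v) := by
  induction m with
  | zero => simp [wsum, List.ofFn_succ]
  | succ m ih =>
    have key : List.ofFn v = v 0 :: List.ofFn (v ∘ Fin.succ) := by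
      rw [List.ofFn_succ]; rfl
    have key2 : List.ofFn (v ∘ Fin.succ)
        = v 1 :: List.ofFn ((v ∘ Fin.succ) ∘ Fin.succ) := by
      rw [List.ofFn_succ]; rfl
    rw [key, key2, weightL_cons_cons, ← key2, ← ih (v ∘ Fin.succ)]
    show wsum A (m+1) v = A ((v ∘ Fin.succ) 0) (v 0) + _
    unfold wsum
    rw [Fin.sum_univ_succ]
    simp [Function.comp]

lemma exists_ofFn (l : List (Fin n)) (h : l ≠ []) :
    ∃ (m : ℕ) (v : Fin (m + 1) → Fin n), List.ofFn v = l ∧ m + 1 = l.length := by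
  have hl : l.length = (l.length - 1) + 1 := by
    cases l with
    | nil => exact absurd rfl h
    | cons a t => simp
  refine ⟨l.length - 1, fun k => l.get (Fin.cast hl.symm k), ?_, hl.symm⟩
  apply List.ext_getElem
  · simp [hl.symm]
  · intro i h1 h2
    rw [List.getElem_ofFn]
    simp

lemma head_ofFn {m : ℕ} (v : Fin (m + 1) → Fin n) (h : List.ofFn v ≠ []) :
    (List.ofFn v).head h = v 0 := by
  have : List.ofFn v = v 0 :: List.ofFn (v ∘ Fin.succ) := by rw [List.ofFn_succ]; rfl
  simp [this]

lemma getLast_ofFn' {m : ℕ} (v : Fin (m + 1) → Fin n) (h : List.ofFn v ≠ []) :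
    (List.ofFn v).getLast h = v (Fin.last m) := by
  rw [List.getLast_eq_getElem, List.getElem_ofFn]
  congr 1
  simp [Fin.last]

lemma closed_nonneg
    (hnoneg : ∀ (m : ℕ) (v : Fin (m + 1) → Fin n), v 0 = v (Fin.last m) →
      (0 : WithTop ℤ) ≤ ∑ k : Fin m, A (v k.succ) (v k.castSucc))
    (l : List (Fin n)) (h : l ≠ []) (hcl : l.head? = l.getLast?) :
    (0 : WithTop ℤ) ≤ weightL A l := by
  obtain ⟨m, v, hv, hlen⟩ := exists_ofFn l h
  subst hv
  rw [← wsum_eq_weightL]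
  apply hnoneg m v
  rw [List.head?_eq_head h, List.getLast?_eq_getLast h] at hcl
  rw [← head_ofFn v h, ← getLast_ofFn' v h]
  exact Option.some_injective _ hcl

lemma wsum_snoc (m : ℕ) (v : Fin (m + 1) → Fin n) (x : Fin n) :
    wsum A (m + 1) (Fin.snoc v x) = wsum A m v + A x (v (Fin.last m)) := by
  unfold wsum
  rw [Fin.sum_univ_castSucc]
  congr 1
  · apply Finset.sum_congr rfl
    intro k _
    rw [Fin.succ_castSucc]
    simp [Fin.snoc_castSucc]
    rw [Fin.succ_castSucc, Fin.snoc_castSucc]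
  · rw [Fin.succ_last]
    simp [Fin.snoc_last, Fin.snoc_castSucc]

lemma wsum_castSucc (m : ℕ) (v : Fin (m + 1 + 1) → Fin n) :
    wsum A (m + 1) v
      = wsum A m (v ∘ Fin.castSucc) + A (v (Fin.last (m + 1))) (v (Fin.last m).castSucc) := by
  have : v = Fin.snoc (v ∘ Fin.castSucc) (v (Fin.last (m + 1))) := by
    funext k
    induction k using Fin.lastCases with
    | last => simp
    | cast k => simp
  calc wsum A (m + 1) v
      = wsum A (m + 1) (Fin.snoc (v ∘ Fin.castSucc) (v (Fin.last (m + 1)))) := by rw [← this]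
    _ = _ := by rw [wsum_snoc]; rfl

lemma W_zero (i : Fin n) : W A s 0 i = if i = s then 0 else ⊤ := by
  have hv : ∀ v : Fin 1 → Fin n, v (Fin.last 0) = v 0 := by
    intro v; congr 1
  split_ifs with h
  · apply le_antisymm
    · calc W A s 0 i ≤ _ := Finset.inf_le (Finset.mem_univ (fun _ : Fin 1 => s))
        _ ≤ 0 := by
            rw [if_pos ⟨rfl, h ▸ rfl⟩]
            simp [wsum]
    · apply Finset.le_inf
      intro v _
      split_ifs with h'
      · simp [wsum]
      · exact le_top
  · apply le_antisymm le_top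
    apply Finset.le_inf
    intro v _
    rw [hv v]
    split_ifs with h'
    · exact absurd (h'.1.symm.trans h'.2).symm h
    · exact le_rfl

lemma W_step (m : ℕ) (i : Fin n) :
    Finset.univ.inf (fun j => A i j + W A s m j) = W A s (m + 1) i := by
  haveI : Nonempty (Fin n) := ⟨i⟩
  apply le_antisymm
  · apply Finset.le_inf
    intro v _
    split_ifs with h
    · obtain ⟨h0, hl⟩ := h
      set j := v (Fin.last m).castSucc with hj
      calc Finset.univ.inf (fun j => A i j + W A s m j)
          ≤ A i j + W A s m j := Finset.inf_le (Finset.mem_univ j)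
        _ ≤ A i j + wsum A m (v ∘ Fin.castSucc) := by
            apply add_le_add le_rfl
            calc W A s m j ≤ _ :=
                Finset.inf_le (Finset.mem_univ (v ∘ Fin.castSucc))
              _ ≤ wsum A m (v ∘ Fin.castSucc) := by
                  rw [if_pos]
                  constructor
                  · exact h0
                  · simp [Function.comp]
                    exact hj.symm
        _ = wsum A (m + 1) v := by rw [wsum_castSucc A m v, hl, add_comm]
    · exact le_top
  · apply Finset.le_inf
    intro j _
    rw [show A i j + W A s m j
        = Finset.univ.inf (fun v : Fin (m + 1) → Fin n =>
            A i j + if v 0 = s ∧ v (Fin.last m) = j then wsum A m v else ⊤) from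
      add_inf _ _ Finset.univ_nonempty _]
    apply Finset.le_inf
    intro v _
    split_ifs with h
    · obtain ⟨h0, hl⟩ := h
      calc W A s (m + 1) i ≤ _ := Finset.inf_le (Finset.mem_univ (Fin.snoc v i))
        _ ≤ A i j + wsum A m v := by
            rw [if_pos, wsum_snoc, hl, add_comm]
            constructor
            · rw [show (0 : Fin (m + 2)) = Fin.castSucc 0 from rfl, Fin.snoc_castSucc]
              exact h0
            · simp
    · simp

lemma W_pad (hdiag : ∀ i, A i i = 0) (m : ℕ) (i : Fin n) :
    W A s (m + 1) i ≤ W A s m i := by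
  apply Finset.le_inf
  intro v _
  split_ifs with h
  · obtain ⟨h0, hl⟩ := h
    calc W A s (m + 1) i ≤ _ := Finset.inf_le (Finset.mem_univ (Fin.snoc v i))
      _ ≤ wsum A m v := by
          rw [if_pos, wsum_snoc, hl, hdiag, add_zero]
          constructor
          · rw [show (0 : Fin (m + 2)) = Fin.castSucc 0 from rfl, Fin.snoc_castSucc]
            exact h0
          · simp
  · exact le_top

lemma P_eq (hdiag : ∀ i, A i i = 0) (P : ℕ → Fin n → WithTop ℤ)
    (hP0 : ∀ i, P 0 i = if i = s then 0 else ⊤)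
    (hPS : ∀ r i, P (r + 1) i = Finset.univ.inf (fun j => A i j + P r j)) :
    ∀ r i, P r i = (Finset.range (r + 1)).inf (fun m => W A s m i) := by
  intro r
  induction r with
  | zero =>
    intro i
    rw [hP0 i]
    simp [W_zero]
  | succ r ih =>
    intro i
    rw [hPS]
    apply le_antisymm
    · apply Finset.le_inf
      intro m hm
      cases m with
      | zero =>
        calc Finset.univ.inf (fun j => A i j + P r j)
            ≤ A i i + P r i := Finset.inf_le (Finset.mem_univ i)
          _ = P r i := by rw [hdiag, zero_add]
          _ ≤ W A s 0 i := by
              rw [ih i]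
              exact Finset.inf_le (Finset.mem_range.2 (Nat.succ_pos r))
      | succ m' =>
        have hm' : m' ∈ Finset.range (r + 1) := by
          simp only [Finset.mem_range] at hm ⊢; omega
        calc Finset.univ.inf (fun j => A i j + P r j)
            ≤ Finset.univ.inf (fun j => A i j + W A s m' j) := by
              apply Finset.le_inf
              intro j _
              calc Finset.univ.inf (fun j => A i j + P r j)
                  ≤ A i j + P r j := Finset.inf_le (Finset.mem_univ j)
                _ ≤ A i j + W A s m' j := by
                    apply add_le_add le_rfl
                    rw [ih j]
                    exact Finset.inf_le hm'
          _ = W A s (m' + 1) i := W_step A s m' i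
    · apply Finset.le_inf
      intro j _
      rw [ih j,
        add_inf _ _ (Finset.nonempty_range_iff.2 (Nat.succ_ne_zero r)) _]
      apply Finset.le_inf
      intro m hm
      calc (Finset.range (r + 1 + 1)).inf (fun m => W A s m i)
          ≤ W A s (m + 1) i := by
            apply Finset.inf_le
            simp only [Finset.mem_range] at hm ⊢; omega
        _ ≤ A i j + W A s m j := by
            rw [← W_step A s m i]
            exact Finset.inf_le (Finset.mem_univ j)

lemma weightL_append (l₁ : List (Fin n)) (x : Fin n) (l₂ : List (Fin n)) :
    weightL A (l₁ ++ x :: l₂) = weightL A (l₁ ++ [x]) + weightL A (x :: l₂) := by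
  induction l₁ with
  | nil => simp
  | cons a t ih =>
    cases t with
    | nil => simp [add_assoc]
    | cons b t' =>
      have h1 : (a :: b :: t') ++ x :: l₂ = a :: b :: (t' ++ x :: l₂) := rfl
      rw [h1, weightL_cons_cons]
      rw [show (b :: t') ++ x :: l₂ = b :: (t' ++ x :: l₂) from rfl] at ih
      rw [ih]
      have h2 : (a :: b :: t') ++ [x] = a :: b :: (t' ++ [x]) := rfl
      rw [h2, weightL_cons_cons, add_assoc]
      rfl

lemma head_mid {α : Type*} (p t u : List α) (c : α) (h1 : p ++ c :: t ≠ [])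
    (h2 : p ++ c :: u ≠ []) : (p ++ c :: t).head h1 = (p ++ c :: u).head h2 := by
  cases p <;> rfl

lemma shorten (hnoneg : ∀ (m : ℕ) (v : Fin (m + 1) → Fin n), v 0 = v (Fin.last m) →
      (0 : WithTop ℤ) ≤ ∑ k : Fin m, A (v k.succ) (v k.castSucc))
    (l : List (Fin n)) (h : l ≠ []) (hlen : n < l.length) :
    ∃ l' : List (Fin n), l' ≠ [] ∧
      l'.head? = l.head? ∧ l'.getLast? = l.getLast? ∧
      l'.length < l.length ∧ weightL A l' ≤ weightL A l := by
  have hninj : ¬ Function.Injective (fun k : Fin l.length => l.get k) := by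
    intro hinj
    have := Fintype.card_le_of_injective _ hinj
    simp at this
    omega
  rw [Function.not_injective_iff] at hninj
  obtain ⟨a', b', heq', hne'⟩ := hninj
  obtain ⟨a, b, hab, heqab⟩ :
      ∃ a b : Fin l.length, (a : ℕ) < (b : ℕ) ∧ l.get a = l.get b := by
    rcases lt_or_gt_of_ne hne' with hlt | hgt
    · exact ⟨a', b', hlt, heq'⟩
    · exact ⟨b', a', hgt, heq'.symm⟩
  have hb : (b : ℕ) < l.length := b.isLt
  set c : Fin n := l.get a with hc
  set p : List (Fin n) := l.take a with hp
  set q₁ : List (Fin n) := (l.drop (a + 1)).take (b - (a + 1)) with hq1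
  set q₂ : List (Fin n) := l.drop (b + 1) with hq2
  have hdec : l = p ++ c :: (q₁ ++ c :: q₂) := by
    have h1 : l = p ++ l.drop a := (List.take_append_drop a l).symm
    have h2 : l.drop a = c :: l.drop (a + 1) :=
      List.drop_eq_getElem_cons (by omega)
    have h3 : l.drop (a + 1) = q₁ ++ (l.drop (a + 1)).drop (b - (a + 1)) :=
      (List.take_append_drop _ _).symm
    have h4 : (l.drop (a + 1)).drop (b - (a + 1)) = l.drop b := by
      rw [List.drop_drop]
      congr 1
      omega
    have h5 : l.drop b = c :: q₂ := by
      rw [List.drop_eq_getElem_cons (by omega : (b : ℕ) < l.length)]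
      congr 1
      exact heqab.symm.trans hc
    conv_lhs => rw [h1, h2]
    rw [h3, h4, h5]
  have hcyc : (0 : WithTop ℤ) ≤ weightL A ((c :: q₁) ++ [c]) := by
    apply closed_nonneg A hnoneg _ (by simp)
    rw [List.getLast?_concat]
    rfl
  refine ⟨p ++ c :: q₂, by simp, ?_, ?_, ?_, ?_⟩
  · conv_rhs => rw [hdec]
    cases p <;> simp
  · conv_rhs => rw [hdec]
    rw [show (p ++ c :: (q₁ ++ c :: q₂) : List (Fin n))
        = (p ++ c :: q₁) ++ (c :: q₂) by simp]
    rw [List.getLast?_append, List.getLast?_append]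
    cases q₂ with
    | nil => simp
    | cons x t => rw [List.getLast?_eq_getLast (l := c :: x :: t) (by simp)]; simp
  · conv_rhs => rw [hdec]
    simp
  · have e1 : weightL A l
        = weightL A (p ++ [c])
            + (weightL A ((c :: q₁) ++ [c]) + weightL A (c :: q₂)) := by
      conv_lhs => rw [hdec]
      rw [weightL_append A p c (q₁ ++ c :: q₂),
        show (c :: (q₁ ++ c :: q₂) : List (Fin n)) = (c :: q₁) ++ c :: q₂ from rfl,
        weightL_append A (c :: q₁) c q₂]
    have e2 : weightL A (p ++ c :: q₂)
        = weightL A (p ++ [c]) + weightL A (c :: q₂) := weightL_append A p c q₂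
    rw [e1, e2]
    exact add_le_add le_rfl (le_add_of_nonneg_left hcyc)

end BF

namespace BF

variable {n : ℕ} (A : Fin n → Fin n → WithTop ℤ) (s : Fin n)

lemma low (hdiag : ∀ i, A i i = 0)
    (hnoneg : ∀ (m : ℕ) (v : Fin (m + 1) → Fin n), v 0 = v (Fin.last m) →
      (0 : WithTop ℤ) ≤ ∑ k : Fin m, A (v k.succ) (v k.castSucc))
    (P : ℕ → Fin n → WithTop ℤ)
    (hP0 : ∀ i, P 0 i = if i = s then 0 else ⊤)
    (hPS : ∀ r i, P (r + 1) i = Finset.univ.inf (fun j => A i j + P r j)) :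
    ∀ (N : ℕ) (l : List (Fin n)), l.length ≤ N → ∀ (h : l ≠ []),
      l.head h = s → P (n - 1) (l.getLast h) ≤ weightL A l := by
  intro N
  induction N with
  | zero =>
    intro l hN h _
    exact absurd (List.length_eq_zero_iff.1 (Nat.le_zero.1 hN)) h
  | succ N ih =>
    intro l hN h hh
    by_cases hle : l.length ≤ n
    · -- short walk: covered by W
      obtain ⟨m, v, hv, hlen⟩ := exists_ofFn l h
      subst hv
      have hn : 0 < n := ((List.ofFn v).head h).pos
      have hm : m ∈ Finset.range (n - 1 + 1) := by
        simp only [Finset.mem_range]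
        rw [List.length_ofFn] at hle
        omega
      rw [head_ofFn v h] at hh
      have hlast : v (Fin.last m) = (List.ofFn v).getLast h :=
        (getLast_ofFn' v h).symm
      calc P (n - 1) ((List.ofFn v).getLast h)
          = (Finset.range (n - 1 + 1)).inf
              (fun m => W A s m ((List.ofFn v).getLast h)) :=
            P_eq A s hdiag P hP0 hPS (n - 1) _
        _ ≤ W A s m ((List.ofFn v).getLast h) := Finset.inf_le hm
        _ ≤ wsum A m v := by
            refine le_trans (Finset.inf_le (Finset.mem_univ v)) ?_
            rw [if_pos ⟨hh, hlast⟩]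
        _ = weightL A (List.ofFn v) := wsum_eq_weightL A m v
    · -- long walk: shorten and recurse
      obtain ⟨l', h', hhd, hlst, hlen', hw⟩ :=
        shorten A hnoneg l h (by omega)
      have hhd' : l'.head h' = l.head h := by
        have := hhd
        rw [List.head?_eq_head h', List.head?_eq_head h] at this
        exact Option.some_injective _ this
      have hlst' : l'.getLast h' = l.getLast h := by
        have := hlst
        rw [List.getLast?_eq_getLast h', List.getLast?_eq_getLast h] at this
        exact Option.some_injective _ this
      calc P (n - 1) (l.getLast h)
          = P (n - 1) (l'.getLast h') := by rw [hlst']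
        _ ≤ weightL A l' := ih l' (by omega) h' (hhd'.trans hh)
        _ ≤ weightL A l := hw

lemma low' (hdiag : ∀ i, A i i = 0)
    (hnoneg : ∀ (m : ℕ) (v : Fin (m + 1) → Fin n), v 0 = v (Fin.last m) →
      (0 : WithTop ℤ) ≤ ∑ k : Fin m, A (v k.succ) (v k.castSucc))
    (P : ℕ → Fin n → WithTop ℤ)
    (hP0 : ∀ i, P 0 i = if i = s then 0 else ⊤)
    (hPS : ∀ r i, P (r + 1) i = Finset.univ.inf (fun j => A i j + P r j))
    (i : Fin n) (m : ℕ) (v : Fin (m + 1) → Fin n) (h0 : v 0 = s)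
    (hl : v (Fin.last m) = i) : P (n - 1) i ≤ wsum A m v := by
  have hne : List.ofFn v ≠ [] := by simp
  have := low A s hdiag hnoneg P hP0 hPS (m + 1) (List.ofFn v) (by simp) hne
    (by rw [head_ofFn v hne]; exact h0)
  rw [getLast_ofFn' v hne, hl, ← wsum_eq_weightL] at this
  exact this

end BF

/-- If the `n`-vertex graph has no negative-weight cycle (every closed walk has
nonnegative total weight), then Bellman–Ford converges in at most `n-1` steps:
`P r = P (n-1)` for all `r ≥ n-1`, `P (n-1) i` is a lower bound on the weight
of every walk from `s` to `i`, and `P (n-1) i` equals the minimum weight over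
all walks from `s` to `i` with at most `n-1` edges, i.e. the true shortest-walk
distance. -/
theorem bellman_ford_converges (n : ℕ) (hn : 0 < n) (s : Fin n)
    (A : Fin n → Fin n → WithTop ℤ) (hdiag : ∀ i, A i i = 0)
    (hnoneg : ∀ (m : ℕ) (v : Fin (m + 1) → Fin n), v 0 = v (Fin.last m) →
      (0 : WithTop ℤ) ≤ ∑ k : Fin m, A (v k.succ) (v k.castSucc))
    (P : ℕ → Fin n → WithTop ℤ)
    (hP0 : ∀ i, P 0 i = if i = s then 0 else ⊤)
    (hPS : ∀ r i, P (r + 1) i = Finset.univ.inf (fun j => A i j + P r j)) :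
    (∀ r : ℕ, n - 1 ≤ r → P r = P (n - 1)) ∧
    (∀ (i : Fin n) (m : ℕ) (v : Fin (m + 1) → Fin n), v 0 = s →
      v (Fin.last m) = i →
      P (n - 1) i ≤ ∑ k : Fin m, A (v k.succ) (v k.castSucc)) ∧
    (∀ i : Fin n, P (n - 1) i =
      (Finset.range n).inf (fun m =>
        Finset.univ.inf (fun v : Fin (m + 1) → Fin n =>
          if v 0 = s ∧ v (Fin.last m) = i then
            ∑ k : Fin m, A (v k.succ) (v k.castSucc)
          else ⊤))) := by
  have hPeq := BF.P_eq A s hdiag P hP0 hPS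
  have hlow := BF.low' A s hdiag hnoneg P hP0 hPS
  refine ⟨?_, hlow, ?_⟩
  · intro r hr
    funext i
    apply le_antisymm
    · rw [hPeq r i, hPeq (n - 1) i]
      exact Finset.inf_mono (Finset.range_subset_range.2 (by omega))
    · rw [hPeq r i]
      apply Finset.le_inf
      intro m _
      apply Finset.le_inf
      intro v _
      split_ifs with hc
      · exact hlow i m v hc.1 hc.2
      · exact le_top
  · intro i
    have := hPeq (n - 1) i
    rw [show n - 1 + 1 = n by omega] at this
    exact this
end

section
/- If an n×n sparse matrix has exactly c dense columns (all n entries nonzero) and no other nonzeros, and a uniformly random permutation is applied to the columns before a cyclic distribution over a q₁×q₂ grid (q₂ dividing n), then each processor column-group receives a hypergeometric number of dense columns, and when c > q₂ log q₂, with high probability every processor owns Θ(c n /(q₁ q₂)) = Θ(z/q) nonzeros where z = cn and q = q₁q₂. -/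
open scoped Classical

lemma count_residue_le (n q a : ℕ) (hq : 0 < q) :
    ((Finset.range n).filter (fun i => i % q = a)).card ≤ (n + q - 1) / q := by
  classical
  have := Finset.card_range ((n + q - 1) / q)
  rw [← this]
  apply Finset.card_le_card_of_injOn (fun i => i / q)
  · intro i hi
    simp only [Finset.mem_coe, Finset.mem_filter, Finset.mem_range] at hi
    simp only [Finset.mem_coe, Finset.mem_range]
    have h1 : i / q ≤ (n - 1) / q := Nat.div_le_div_right (by omega)
    have h2 : (n + q - 1) / q = (n - 1) / q + 1 := by
      have h3 : n + q - 1 = (n - 1) + q := by omega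
      rw [h3, Nat.add_div_right _ hq]
    omega
  · intro i hi j hj hij
    have hi' := (Finset.mem_filter.mp hi).2
    have hj' := (Finset.mem_filter.mp hj).2
    have hij' : i / q = j / q := hij
    have h3 : i % q = j % q := hi'.trans hj'.symm
    conv_lhs => rw [← Nat.div_add_mod i q]
    rw [hij', h3, Nat.div_add_mod]

lemma fin_count_residue_le (n q a : ℕ) (hq : 0 < q) :
    (Finset.univ.filter (fun x : Fin n => (x : ℕ) % q = a)).card ≤ (n + q - 1) / q := by
  classical
  refine le_trans (Finset.card_le_card_of_injOn (fun x => (x : ℕ)) ?_ ?_)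
    (count_residue_le n q a hq)
  · intro x hx
    simp only [Finset.mem_coe, Finset.mem_filter, Finset.mem_univ, true_and] at hx
    simp [Finset.mem_filter, Finset.mem_range, x.isLt, hx]
  · intro x _ y _ h
    exact Fin.ext h

lemma perm_maps_into_count (n : ℕ) (S T : Finset (Fin n)) :
    (Finset.univ.filter (fun σ : Equiv.Perm (Fin n) => ∀ j ∈ S, σ j ∈ T)).card
      ≤ T.card.descFactorial S.card * (n - S.card).factorial := by
  classical
  set A := Finset.univ.filter (fun σ : Equiv.Perm (Fin n) => ∀ j ∈ S, σ j ∈ T) with hA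
  rcases A.eq_empty_or_nonempty with h | ⟨σ₀, hσ₀⟩
  · simp [h]
  have hσ₀' : ∀ j ∈ S, σ₀ j ∈ T := (Finset.mem_filter.mp hσ₀).2
  haveI : Nonempty (↥S ↪ ↥T) :=
    ⟨⟨fun j => ⟨σ₀ j, hσ₀' j j.2⟩, fun a b hab =>
      Subtype.ext (σ₀.injective (congrArg Subtype.val hab))⟩⟩
  set F : Equiv.Perm (Fin n) → (↥S ↪ ↥T) := fun σ =>
    if h : ∀ j ∈ S, σ j ∈ T then
      ⟨fun j => ⟨σ j, h j j.2⟩, fun a b hab =>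
        Subtype.ext (σ.injective (congrArg Subtype.val hab))⟩
    else Classical.arbitrary _ with hF
  rw [Finset.card_eq_sum_card_fiberwise (f := F) (s := A) (t := Finset.univ)
    (fun σ _ => Finset.mem_univ _)]
  have hfib : ∀ f : ↥S ↪ ↥T,
      (A.filter (fun σ => F σ = f)).card ≤ (n - S.card).factorial := by
    intro f
    set B := A.filter (fun σ => F σ = f) with hB
    rcases B.eq_empty_or_nonempty with hBe | ⟨σ₁, hσ₁⟩
    · simp [hBe]
    set J : Finset (Fin n) := Finset.univ.image (fun j : ↥S => (f j : Fin n)) with hJ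
    have hJcard : J.card = S.card := by
      rw [hJ, Finset.card_image_of_injective _
        (fun a b hab => f.injective (Subtype.ext hab))]
      simp
    have key : ∀ σ, σ ∈ B → ∀ j, ∀ hj : j ∈ S, σ j = (f ⟨j, hj⟩ : Fin n) := by
      intro σ hσ j hj
      obtain ⟨hσA, hσf⟩ := Finset.mem_filter.mp hσ
      have hmem : ∀ j ∈ S, σ j ∈ T := (Finset.mem_filter.mp hσA).2
      have hFσ : F σ = f := hσf
      rw [hF] at hFσ
      simp only [dif_pos hmem] at hFσ
      have := congrArg (fun g : ↥S ↪ ↥T => (g ⟨j, hj⟩ : Fin n)) hFσ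
      exact this
    have hcompl : ∀ σ, σ ∈ B → ∀ x : Fin n, x ∉ S → σ x ∈ Jᶜ := by
      intro σ hσ x hx
      simp only [Finset.mem_compl, hJ, Finset.mem_image, Finset.mem_univ, true_and, not_exists]
      intro j hj
      rw [← key σ hσ j j.2] at hj
      exact hx (by rw [← σ.injective hj]; exact j.2)
    -- the complement of S may be empty
    rcases eq_or_ne (Sᶜ : Finset (Fin n)) ∅ with hSc | hSc
    · -- S = univ : fiber has at most one element
      have : B.card ≤ 1 := by
        refine Finset.card_le_one.mpr fun σ hσ τ hτ => ?_
        refine Equiv.ext fun j => ?_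
        have hjS : j ∈ S := by
          by_contra hj
          exact absurd (Finset.mem_compl.mpr hj) (by simp [hSc])
        rw [key σ hσ j hjS, key τ hτ j hjS]
      exact this.trans (Nat.one_le_iff_ne_zero.mpr (Nat.factorial_ne_zero _))
    obtain ⟨x₀, hx₀⟩ := Finset.nonempty_iff_ne_empty.mpr hSc
    haveI : Nonempty ↥(Jᶜ : Finset (Fin n)) :=
      ⟨⟨σ₁ x₀, hcompl σ₁ hσ₁ x₀ (Finset.mem_compl.mp hx₀)⟩⟩
    set G : Equiv.Perm (Fin n) → (↥(Sᶜ : Finset (Fin n)) → ↥(Jᶜ : Finset (Fin n))) :=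
      fun σ x => if h : σ x ∈ Jᶜ then ⟨σ x, h⟩ else Classical.arbitrary _ with hG
    have hle := Finset.card_le_card_of_injOn (s := B) G
      (t := Finset.univ.filter (fun g : ↥(Sᶜ : Finset (Fin n)) → ↥(Jᶜ : Finset (Fin n)) =>
        Function.Injective g)) ?_ ?_
    · refine hle.trans ?_
      have : (Finset.univ.filter (fun g : ↥(Sᶜ : Finset (Fin n)) → ↥(Jᶜ : Finset (Fin n)) =>
          Function.Injective g)).card = Fintype.card (↥(Sᶜ : Finset (Fin n)) ↪ ↥(Jᶜ : Finset (Fin n))) := by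
        rw [← Fintype.card_subtype]
        exact Fintype.card_congr (Equiv.subtypeInjectiveEquivEmbedding _ _)
      rw [this, Fintype.card_embedding_eq]
      simp only [Fintype.card_coe, Finset.card_compl, Fintype.card_fin, hJcard]
      rw [Nat.descFactorial_self]
    · -- maps into injective functions
      intro σ hσ
      simp only [Finset.mem_coe, Finset.mem_filter, Finset.mem_univ, true_and]
      intro x y hxy
      have hx := hcompl σ hσ x (Finset.mem_compl.mp x.2)
      have hy := hcompl σ hσ y (Finset.mem_compl.mp y.2)
      rw [hG] at hxy
      simp only [dif_pos hx, dif_pos hy, Subtype.mk.injEq] at hxy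
      exact Subtype.ext (σ.injective hxy)
    · -- injective on the fiber
      intro σ hσ τ hτ hστ
      refine Equiv.ext fun j => ?_
      by_cases hj : j ∈ S
      · rw [key σ hσ j hj, key τ hτ j hj]
      · have hjc : j ∈ (Sᶜ : Finset (Fin n)) := Finset.mem_compl.mpr hj
        have h1 := congrFun hστ ⟨j, hjc⟩
        have hx := hcompl σ hσ j hj
        have hy := hcompl τ hτ j hj
        rw [hG] at h1
        simp only [dif_pos hx, dif_pos hy, Subtype.mk.injEq] at h1
        exact h1
  calc ∑ f ∈ (Finset.univ : Finset (↥S ↪ ↥T)), (A.filter (fun σ => F σ = f)).card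
      ≤ ∑ _f ∈ (Finset.univ : Finset (↥S ↪ ↥T)), (n - S.card).factorial :=
        Finset.sum_le_sum fun f _ => hfib f
    _ = Fintype.card (↥S ↪ ↥T) * (n - S.card).factorial := by
        rw [Finset.sum_const, Finset.card_univ, smul_eq_mul]
    _ = T.card.descFactorial S.card * (n - S.card).factorial := by
        rw [Fintype.card_embedding_eq]
        simp [Fintype.card_coe]

lemma bad_count (n q₂ : ℕ) (hq₂ : 0 < q₂) (hdvd : q₂ ∣ n) (C : Finset (Fin n)) (b k : ℕ) :
    (Finset.univ.filter (fun σ : Equiv.Perm (Fin n) =>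
        k ≤ (C.filter (fun j => (σ j : ℕ) % q₂ = b)).card)).card
      ≤ C.card.choose k * ((n / q₂).descFactorial k * (n - k).factorial) := by
  classical
  set T : Finset (Fin n) := Finset.univ.filter (fun x : Fin n => (x : ℕ) % q₂ = b) with hT
  have hTcard : T.card ≤ n / q₂ := by
    refine (fin_count_residue_le n q₂ b hq₂).trans ?_
    obtain ⟨t, rfl⟩ := hdvd
    rcases Nat.eq_zero_or_pos t with rfl | ht
    · simp [Nat.div_eq_of_lt (by omega : q₂ - 1 < q₂)]
    have h5 : q₂ * t + q₂ - 1 = q₂ * t + (q₂ - 1) := by omega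
    rw [h5, Nat.mul_div_cancel_left _ hq₂, Nat.mul_add_div hq₂,
      Nat.div_eq_of_lt (by omega : q₂ - 1 < q₂)]
    omega
  have hsub : (Finset.univ.filter (fun σ : Equiv.Perm (Fin n) =>
      k ≤ (C.filter (fun j => (σ j : ℕ) % q₂ = b)).card))
      ⊆ (C.powersetCard k).biUnion
        (fun S => Finset.univ.filter (fun σ : Equiv.Perm (Fin n) => ∀ j ∈ S, σ j ∈ T)) := by
    intro σ hσ
    have hk : k ≤ (C.filter (fun j => (σ j : ℕ) % q₂ = b)).card :=
      (Finset.mem_filter.mp hσ).2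
    obtain ⟨S, hS, hScard⟩ := Finset.exists_subset_card_eq hk
    refine Finset.mem_biUnion.mpr ⟨S, ?_, ?_⟩
    · exact Finset.mem_powersetCard.mpr ⟨hS.trans (Finset.filter_subset _ _), hScard⟩
    · refine Finset.mem_filter.mpr ⟨Finset.mem_univ _, fun j hj => ?_⟩
      have := (Finset.mem_filter.mp (hS hj)).2
      exact Finset.mem_filter.mpr ⟨Finset.mem_univ _, this⟩
  refine (Finset.card_le_card hsub).trans ((Finset.card_biUnion_le).trans ?_)
  calc ∑ S ∈ C.powersetCard k,
        (Finset.univ.filter (fun σ : Equiv.Perm (Fin n) => ∀ j ∈ S, σ j ∈ T)).card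
      ≤ ∑ S ∈ C.powersetCard k, (n / q₂).descFactorial k * (n - k).factorial := by
        refine Finset.sum_le_sum fun S hS => ?_
        have hScard : S.card = k := (Finset.mem_powersetCard.mp hS).2
        refine (perm_maps_into_count n S T).trans ?_
        rw [hScard]
        exact Nat.mul_le_mul_right _ (Nat.descFactorial_le _ hTcard)
    _ = C.card.choose k * ((n / q₂).descFactorial k * (n - k).factorial) := by
        rw [Finset.sum_const, Finset.card_powersetCard, smul_eq_mul]

lemma desc_mul_pow_le (m q n k : ℕ) (h : m * q ≤ n) (hq : 1 ≤ q) :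
    m.descFactorial k * q ^ k ≤ n.descFactorial k := by
  induction k with
  | zero => simp
  | succ k ih =>
    rw [Nat.descFactorial_succ, Nat.descFactorial_succ, pow_succ]
    have h1 : (m - k) * q ≤ n - k := by
      rw [Nat.sub_mul]
      exact tsub_le_tsub h (Nat.le_mul_of_pos_right k hq)
    calc (m - k) * m.descFactorial k * (q ^ k * q)
        = ((m - k) * q) * (m.descFactorial k * q ^ k) := by ring
      _ ≤ (n - k) * n.descFactorial k := Nat.mul_le_mul h1 ih

lemma choose_mul_sq_le (c q₂ k : ℕ) (hq₂ : 2 ≤ q₂)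
    (hc : (q₂ : ℝ) * Real.log q₂ < c) (hk : 2 * Real.exp 1 * c / q₂ < k) :
    (c.choose k : ℝ) * (q₂ : ℝ) ^ 2 ≤ (q₂ : ℝ) ^ k := by
  have hq₂' : (2 : ℝ) ≤ (q₂ : ℝ) := by exact_mod_cast hq₂
  have hq₂0 : (0 : ℝ) < q₂ := by linarith
  have hlogq : 0 < Real.log q₂ := Real.log_pos (by linarith)
  have hc0 : (0 : ℝ) < c := lt_trans (by positivity) hc
  have he : (0 : ℝ) < Real.exp 1 := Real.exp_pos 1
  have he2 : (2 : ℝ) ≤ Real.exp 1 := by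
    have := Real.add_one_le_exp 1
    linarith
  have hlog2 : (0.6931471803 : ℝ) < Real.log 2 := Real.log_two_gt_d9
  have hk0 : (0 : ℝ) < k := lt_of_le_of_lt (by positivity) hk
  have hkn0 : 0 < k := by exact_mod_cast hk0
  -- choose ≤ c^k / k!
  have step1 : (c.choose k : ℝ) ≤ (c : ℝ) ^ k / k.factorial := by
    rw [le_div_iff₀ (by exact_mod_cast k.factorial_pos)]
    have hnat : k.factorial * c.choose k ≤ c ^ k :=
      le_trans (le_of_eq (Nat.descFactorial_eq_factorial_mul_choose c k).symm)
        (Nat.descFactorial_le_pow c k)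
    calc (c.choose k : ℝ) * k.factorial = ((k.factorial * c.choose k : ℕ) : ℝ) := by
          push_cast; ring
      _ ≤ ((c ^ k : ℕ) : ℝ) := by exact_mod_cast hnat
      _ = (c : ℝ) ^ k := by push_cast; ring
  -- k^k / k! ≤ e^k
  have step2 : (k : ℝ) ^ k / k.factorial ≤ Real.exp k := by
    refine le_trans ?_ (Real.sum_le_exp_of_nonneg (by positivity) (k + 1))
    exact Finset.single_le_sum (f := fun i => (k : ℝ) ^ i / i.factorial)
      (fun i _ => by positivity) (Finset.self_mem_range_succ k)
  -- c^k / k! ≤ (e c / k)^k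
  have step3 : (c : ℝ) ^ k / k.factorial ≤ (Real.exp 1 * c / k) ^ k := by
    have hsplit : (c : ℝ) ^ k / k.factorial
        = ((c : ℝ) / k) ^ k * ((k : ℝ) ^ k / k.factorial) := by
      rw [div_pow]
      field_simp
    rw [hsplit]
    have hexp : Real.exp (k : ℝ) = Real.exp 1 ^ k := by
      rw [← Real.exp_nat_mul]; norm_num
    calc ((c : ℝ) / k) ^ k * ((k : ℝ) ^ k / k.factorial)
        ≤ ((c : ℝ) / k) ^ k * Real.exp 1 ^ k := by
          refine mul_le_mul_of_nonneg_left ?_ (by positivity)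
          rw [← hexp]; exact step2
      _ = (Real.exp 1 * c / k) ^ k := by
          rw [← mul_pow]; ring_nf
  -- e c / k ≤ q₂ / 2
  have step4 : Real.exp 1 * (c : ℝ) / k ≤ (q₂ : ℝ) / 2 := by
    rw [div_le_div_iff₀ hk0 (by norm_num)]
    rw [div_lt_iff₀ hq₂0] at hk
    nlinarith
  have step5 : (c.choose k : ℝ) ≤ ((q₂ : ℝ) / 2) ^ k := by
    refine step1.trans (step3.trans ?_)
    exact pow_le_pow_left₀ (by positivity) step4 k
  -- q₂^2 ≤ 2^k
  have step6 : (q₂ : ℝ) ^ 2 ≤ (2 : ℝ) ^ k := by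
    have hck : Real.log q₂ < (c : ℝ) / q₂ := by
      rw [lt_div_iff₀ hq₂0]; linarith [hc]
    have h2k : 2 * Real.log q₂ ≤ (k : ℝ) * Real.log 2 := by
      have hk' : 2 * Real.exp 1 * Real.log q₂ < (k : ℝ) := by
        refine lt_of_le_of_lt ?_ hk
        rw [le_div_iff₀ hq₂0]
        have : Real.log q₂ * q₂ ≤ (c:ℝ) := by
          rw [mul_comm]; linarith
        nlinarith
      nlinarith [hlogq, hlog2, he2, mul_pos he hlogq]
    have e1 : (q₂ : ℝ) ^ 2 = Real.exp (2 * Real.log q₂) := by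
      rw [mul_comm, Real.exp_mul, Real.exp_log hq₂0]
      norm_num
    have e2 : (2 : ℝ) ^ k = Real.exp ((k : ℝ) * Real.log 2) := by
      rw [mul_comm, Real.exp_mul, Real.exp_log (by norm_num : (0:ℝ) < 2)]
      norm_num
    rw [e1, e2]
    exact Real.exp_le_exp.mpr h2k
  calc (c.choose k : ℝ) * (q₂ : ℝ) ^ 2 ≤ ((q₂ : ℝ) / 2) ^ k * (q₂ : ℝ) ^ 2 := by
        refine mul_le_mul_of_nonneg_right step5 (by positivity)
    _ ≤ (q₂ : ℝ) ^ k := by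
        rw [div_pow, div_mul_eq_mul_div, div_le_iff₀ (by positivity)]
        calc (q₂ : ℝ) ^ k * (q₂ : ℝ) ^ 2 ≤ (q₂ : ℝ) ^ k * (2 : ℝ) ^ k :=
              mul_le_mul_of_nonneg_left step6 (by positivity)
          _ = (q₂ : ℝ) ^ k * 2 ^ k := by ring

lemma bad_le_real (n c q₂ k : ℕ) (hq₂ : 2 ≤ q₂) (hcn : c ≤ n)
    (hc : (q₂ : ℝ) * Real.log q₂ < c) (hk : 2 * Real.exp 1 * c / q₂ < k) :
    ((c.choose k * ((n / q₂).descFactorial k * (n - k).factorial) : ℕ) : ℝ)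
      ≤ (n.factorial : ℝ) / (q₂ : ℝ) ^ 2 := by
  have hq₂0 : (0 : ℝ) < q₂ := by positivity
  by_cases hkn : k ≤ n
  · have h1 : (n / q₂).descFactorial k * q₂ ^ k ≤ n.descFactorial k :=
      desc_mul_pow_le _ _ _ _ (Nat.div_mul_le_self n q₂) (by omega)
    have h2 : (n - k).factorial * n.descFactorial k = n.factorial :=
      Nat.factorial_mul_descFactorial hkn
    have h1' : ((n / q₂).descFactorial k : ℝ) ≤ (n.descFactorial k : ℝ) / (q₂ : ℝ) ^ k := by
      rw [le_div_iff₀ (by positivity)]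
      exact_mod_cast h1
    have h3' : (c.choose k : ℝ) ≤ (q₂ : ℝ) ^ k / (q₂ : ℝ) ^ 2 := by
      rw [le_div_iff₀ (by positivity)]
      exact choose_mul_sq_le c q₂ k hq₂ hc hk
    push_cast
    calc (c.choose k : ℝ) * (((n / q₂).descFactorial k : ℝ) * ((n - k).factorial : ℝ))
        ≤ ((q₂ : ℝ) ^ k / (q₂ : ℝ) ^ 2) * (((n.descFactorial k : ℝ) / (q₂ : ℝ) ^ k)
            * ((n - k).factorial : ℝ)) := by
          refine mul_le_mul h3' ?_ (by positivity) (by positivity)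
          exact mul_le_mul_of_nonneg_right h1' (by positivity)
      _ = ((n - k).factorial * n.descFactorial k : ℝ) / (q₂ : ℝ) ^ 2 := by
          field_simp
      _ = (n.factorial : ℝ) / (q₂ : ℝ) ^ 2 := by
          rw [← h2]; push_cast; ring
  · have hck : c.choose k = 0 := Nat.choose_eq_zero_of_lt (lt_of_le_of_lt hcn (not_le.mp hkn))
    rw [hck]
    simp
    positivity

/-- Load balance after a random column permutation: an `n × n` matrix has `c`
dense columns `C` (all entries nonzero) and no other nonzeros; a uniformly
random permutation `σ` of the columns is applied before a cyclic distribution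
over a `q₁ × q₂` grid with `q₂ ∣ n`. If `c > q₂ log q₂`, then with probability
at least `1 - 1/q₂` (counted over all `n!` permutations), every processor
column group `b` receives at most `2e·c/q₂` dense columns, and hence every
processor `(a,b)` owns at most `(2e·c/q₂)·⌈n/q₁⌉ = O(cn/(q₁q₂)) = O(z/q)`
nonzeros. -/
theorem random_permutation_load_balance (n c q₁ q₂ : ℕ)
    (hq₁ : 0 < q₁) (hq₂ : 2 ≤ q₂) (hdvd : q₂ ∣ n)
    (C : Finset (Fin n)) (hC : C.card = c)
    (hc : (q₂ : ℝ) * Real.log q₂ < c) :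
    let good : Finset (Equiv.Perm (Fin n)) :=
      Finset.univ.filter (fun σ => ∀ b : Fin q₂,
        ((C.filter (fun j => (σ j : ℕ) % q₂ = (b : ℕ))).card : ℝ) ≤
          2 * Real.exp 1 * c / q₂)
    ((1 : ℝ) - 1 / q₂) * (Nat.factorial n) ≤ good.card ∧
    (∀ σ ∈ good, ∀ (a : Fin q₁) (b : Fin q₂),
      ((((Finset.range n).filter (fun i => i % q₁ = (a : ℕ))).card *
        (C.filter (fun j => (σ j : ℕ) % q₂ = (b : ℕ))).card : ℕ) : ℝ) ≤
        (2 * Real.exp 1 * c / q₂) * (((n + q₁ - 1) / q₁ : ℕ) : ℝ)) := by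
  intro good
  have hgood : good = Finset.univ.filter (fun σ => ∀ b : Fin q₂,
      ((C.filter (fun j => (σ j : ℕ) % q₂ = (b : ℕ))).card : ℝ) ≤
        2 * Real.exp 1 * c / q₂) := rfl
  have hq₂0 : 0 < q₂ := by omega
  have hq₂R : (0 : ℝ) < q₂ := by positivity
  set x : ℝ := 2 * Real.exp 1 * c / q₂ with hxdef
  have hx0 : 0 ≤ x := by positivity
  set k : ℕ := ⌊x⌋₊ + 1 with hkdef
  have hkx : x < k := by
    push_cast
    simpa [hkdef] using Nat.lt_floor_add_one x
  have hcn : c ≤ n := by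
    rw [← hC]
    exact le_trans (Finset.card_le_univ C) (by simp)
  -- per-group bad sets
  set badb : Fin q₂ → Finset (Equiv.Perm (Fin n)) := fun b =>
    Finset.univ.filter (fun σ : Equiv.Perm (Fin n) =>
      k ≤ (C.filter (fun j => (σ j : ℕ) % q₂ = (b : ℕ))).card) with hbadb
  have hbadbR : ∀ b : Fin q₂, ((badb b).card : ℝ) ≤ (n.factorial : ℝ) / (q₂ : ℝ) ^ 2 := by
    intro b
    have h1 := bad_count n q₂ hq₂0 hdvd C (b : ℕ) k
    rw [hC] at h1
    refine le_trans ?_ (bad_le_real n c q₂ k hq₂ hcn hc hkx)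
    exact_mod_cast h1
  set badAll : Finset (Equiv.Perm (Fin n)) :=
    Finset.univ.filter (fun σ : Equiv.Perm (Fin n) => ¬ ∀ b : Fin q₂,
      ((C.filter (fun j => (σ j : ℕ) % q₂ = (b : ℕ))).card : ℝ) ≤ x) with hbadAll
  have hsplit : good.card + badAll.card = n.factorial := by
    rw [hgood, hbadAll]
    rw [Finset.card_filter_add_card_filter_not]
    rw [Finset.card_univ, Fintype.card_perm, Fintype.card_fin]
  have hsub : badAll ⊆ (Finset.univ : Finset (Fin q₂)).biUnion badb := by
    intro σ hσ
    have h1 : ¬ ∀ b : Fin q₂,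
        ((C.filter (fun j => (σ j : ℕ) % q₂ = (b : ℕ))).card : ℝ) ≤ x :=
      (Finset.mem_filter.mp hσ).2
    push_neg at h1
    obtain ⟨b, hb⟩ := h1
    refine Finset.mem_biUnion.mpr ⟨b, Finset.mem_univ _, ?_⟩
    refine Finset.mem_filter.mpr ⟨Finset.mem_univ _, ?_⟩
    have := (Nat.floor_lt hx0).mpr hb
    omega
  have hbadAllR : (badAll.card : ℝ) ≤ (n.factorial : ℝ) / q₂ := by
    have h2 : badAll.card ≤ ∑ b : Fin q₂, (badb b).card :=
      le_trans (Finset.card_le_card hsub) Finset.card_biUnion_le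
    calc (badAll.card : ℝ) ≤ ∑ b : Fin q₂, ((badb b).card : ℝ) := by exact_mod_cast h2
      _ ≤ ∑ _b : Fin q₂, (n.factorial : ℝ) / (q₂ : ℝ) ^ 2 :=
          Finset.sum_le_sum fun b _ => hbadbR b
      _ = (q₂ : ℝ) * ((n.factorial : ℝ) / (q₂ : ℝ) ^ 2) := by
          rw [Finset.sum_const, Finset.card_univ, Fintype.card_fin, nsmul_eq_mul]
      _ = (n.factorial : ℝ) / q₂ := by
          field_simp
  constructor
  · have hgoodR : (good.card : ℝ) = (n.factorial : ℝ) - badAll.card := by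
      have := hsplit
      push_cast [← this]
      ring
    rw [hgoodR]
    have hfac : (0 : ℝ) ≤ (n.factorial : ℝ) := by positivity
    have : ((1 : ℝ) - 1 / q₂) * (n.factorial : ℝ)
        = (n.factorial : ℝ) - (n.factorial : ℝ) / q₂ := by
      field_simp
    rw [this]
    linarith
  · intro σ hσ a b
    have hcol : ((C.filter (fun j => (σ j : ℕ) % q₂ = (b : ℕ))).card : ℝ) ≤ x :=
      ((Finset.mem_filter.mp (hgood ▸ hσ)).2) b
    have hrow : (((Finset.range n).filter (fun i => i % q₁ = (a : ℕ))).card : ℝ)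
        ≤ (((n + q₁ - 1) / q₁ : ℕ) : ℝ) := by
      exact_mod_cast count_residue_le n q₁ (a : ℕ) hq₁
    push_cast
    calc (((Finset.range n).filter (fun i => i % q₁ = (a : ℕ))).card : ℝ) *
          ((C.filter (fun j => (σ j : ℕ) % q₂ = (b : ℕ))).card : ℝ)
        ≤ (((n + q₁ - 1) / q₁ : ℕ) : ℝ) *
          ((C.filter (fun j => (σ j : ℕ) % q₂ = (b : ℕ))).card : ℝ) :=
          mul_le_mul_of_nonneg_right hrow (Nat.cast_nonneg _)
      _ ≤ (((n + q₁ - 1) / q₁ : ℕ) : ℝ) * x :=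
          mul_le_mul_of_nonneg_left hcol (Nat.cast_nonneg _)
      _ = x * (((n + q₁ - 1) / q₁ : ℕ) : ℝ) := by ring
end
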